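/- Let V be a maximal isotropic subspace with respect to ω, let ψ₀ be a stabilizer state for V, let (e_i, f_i), i : Fin N, be error spinor labels and (c_j, d_j), j : Fin K, be codeword spinor labels. Suppose that for any two distinct index pairs (i,j) ≠ (m,n) the combined labels lie in distinct cosets of V, i.e. (e_i + c_j + e_m + c_n, f_i + d_j + f_m + d_n) ∉ V. Then the N·K syndrome states σ(e_i,f_i).mulVec (σ(c_j,d_j).mulVec ψ₀) are pairwise orthogonal; hence the code spanned by the codewords σ(c_j,d_j).mulVec ψ₀ has distinguishable syndromes and corrects the error set {σ(e_i,f_i)}. (The error-correction condition, Eq. (5) of the paper.) -/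
import Mathlib


open Matrix BigOperators

/-- The mod-2 dot product of two bitstrings. -/
def dotp {p : ℕ} (a b : Fin p → ZMod 2) : ZMod 2 := ∑ i, a i * b i

/-- The sign `(-1)^t` for `t : ZMod 2`. -/
noncomputable def sgn (t : ZMod 2) : ℂ := (-1 : ℂ) ^ t.val

/-- The Pauli spinor matrix `σ(a,b)`, representing `⊗ᵢ X^(a i) Z^(b i)`:
`σ(a,b) x y = (-1)^(b⬝x)` if `y = x + a` and `0` otherwise. -/
noncomputable def pauli {p : ℕ} (a b : Fin p → ZMod 2) :
    Matrix (Fin p → ZMod 2) (Fin p → ZMod 2) ℂ :=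
  fun x y => if y = x + a then sgn (dotp b x) else 0

/-- The symplectic form `ω((a,b),(c,d)) = a⬝d + b⬝c` on pairs of bitstrings. -/
def omegaF {p : ℕ} (u v : (Fin p → ZMod 2) × (Fin p → ZMod 2)) : ZMod 2 :=
  dotp u.1 v.2 + dotp u.2 v.1

/-- A subspace is isotropic if `ω` vanishes on all pairs of its elements. -/
def IsIsotropic {p : ℕ}
    (V : Submodule (ZMod 2) ((Fin p → ZMod 2) × (Fin p → ZMod 2))) : Prop :=
  ∀ u ∈ V, ∀ v ∈ V, omegaF u v = 0

/-- A maximal isotropic subspace: isotropic and not properly contained in any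
isotropic subspace. -/
def IsMaxIsotropic {p : ℕ}
    (V : Submodule (ZMod 2) ((Fin p → ZMod 2) × (Fin p → ZMod 2))) : Prop :=
  IsIsotropic V ∧ ∀ W, IsIsotropic W → V ≤ W → W = V

lemma zmod2_cases (t : ZMod 2) : t = 0 ∨ t = 1 := by revert t; decide

lemma dotp_comm {p : ℕ} (a b : Fin p → ZMod 2) : dotp a b = dotp b a := by
  unfold dotp; exact Finset.sum_congr rfl fun i _ => mul_comm _ _

lemma dotp_add_left {p : ℕ} (a b c : Fin p → ZMod 2) :
    dotp (a + b) c = dotp a c + dotp b c := by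
  unfold dotp; rw [← Finset.sum_add_distrib]
  exact Finset.sum_congr rfl fun i _ => by simp [add_mul]

lemma dotp_add_right {p : ℕ} (a b c : Fin p → ZMod 2) :
    dotp a (b + c) = dotp a b + dotp a c := by
  rw [dotp_comm, dotp_add_left, dotp_comm b a, dotp_comm c a]

lemma dotp_zero_left {p : ℕ} (a : Fin p → ZMod 2) : dotp 0 a = 0 := by
  unfold dotp; simp

lemma dotp_smul_left {p : ℕ} (s : ZMod 2) (a b : Fin p → ZMod 2) :
    dotp (s • a) b = s * dotp a b := by
  unfold dotp; rw [Finset.mul_sum]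
  exact Finset.sum_congr rfl fun i _ => by simp [mul_assoc]

lemma sgn_zero : sgn 0 = 1 := by simp [sgn, ZMod.val_zero]
lemma sgn_one : sgn 1 = -1 := by
  have : (1 : ZMod 2).val = 1 := rfl
  simp [sgn, this]
lemma two_eq_zero : (1 + 1 : ZMod 2) = 0 := rfl

lemma sgn_add (s t : ZMod 2) : sgn (s + t) = sgn s * sgn t := by
  rcases zmod2_cases s with rfl | rfl <;> rcases zmod2_cases t with rfl | rfl <;>
    simp [sgn_zero, sgn_one, two_eq_zero]

lemma sgn_conj (t : ZMod 2) : (starRingEnd ℂ) (sgn t) = sgn t := by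
  rcases zmod2_cases t with rfl | rfl <;> simp [sgn_zero, sgn_one]

lemma sgn_sq (t : ZMod 2) : sgn t * sgn t = 1 := by
  rcases zmod2_cases t with rfl | rfl <;> simp [sgn_zero, sgn_one]

lemma sgn_neg_of_add_one {s t : ZMod 2} (h : s + t = 1) : sgn s = -sgn t := by
  rcases zmod2_cases s with rfl | rfl <;> rcases zmod2_cases t with rfl | rfl <;>
    simp_all [sgn_zero, sgn_one, two_eq_zero]

lemma addv_self {p : ℕ} (a : Fin p → ZMod 2) : a + a = 0 := by
  funext i
  rcases zmod2_cases (a i) with h | h <;> simp [Pi.add_apply, h] <;> rfl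

lemma mulVec_pauli {p : ℕ} (a b : Fin p → ZMod 2) (ψ : (Fin p → ZMod 2) → ℂ)
    (x : Fin p → ZMod 2) :
    (pauli a b).mulVec ψ x = sgn (dotp b x) * ψ (x + a) := by
  simp only [Matrix.mulVec, dotProduct, pauli, ite_mul, zero_mul]
  rw [Finset.sum_ite_eq' Finset.univ (x + a) (fun y => sgn (dotp b x) * ψ y)]
  simp

lemma sum_shift {p : ℕ} (a : Fin p → ZMod 2) (f : (Fin p → ZMod 2) → ℂ) :
    ∑ x, f (x + a) = ∑ x, f x :=
  Fintype.sum_equiv (Equiv.addRight a) _ _ (fun _ => rfl)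

lemma pauli_pauli {p : ℕ} (a b c d : Fin p → ZMod 2) (ψ : (Fin p → ZMod 2) → ℂ)
    (x : Fin p → ZMod 2) :
    (pauli a b).mulVec ((pauli c d).mulVec ψ) x
      = sgn (dotp d a) * (pauli (a + c) (b + d)).mulVec ψ x := by
  rw [mulVec_pauli, mulVec_pauli, mulVec_pauli, dotp_add_right, dotp_add_left,
    sgn_add, sgn_add, ← add_assoc]
  ring

lemma pauli_adjoint {p : ℕ} (a b : Fin p → ZMod 2) (φ ψ : (Fin p → ZMod 2) → ℂ) :
    ∑ x, (starRingEnd ℂ) ((pauli a b).mulVec φ x) * ψ x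
      = sgn (dotp a b) * ∑ x, (starRingEnd ℂ) (φ x) * (pauli a b).mulVec ψ x := by
  simp only [mulVec_pauli, _root_.map_mul, sgn_conj]
  rw [← sum_shift a (fun x => (starRingEnd ℂ) (φ x) * (sgn (dotp b x) * ψ (x + a))),
    Finset.mul_sum]
  apply Finset.sum_congr rfl
  intro x _
  rw [add_assoc, addv_self, add_zero, dotp_add_right, sgn_add]
  have hs : sgn (dotp a b) * sgn (dotp b a) = 1 := by
    rw [dotp_comm b a]; exact sgn_sq _
  linear_combination (-(starRingEnd ℂ) (φ (x + a)) * sgn (dotp b x) * ψ x) * hs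


lemma omegaF_comm {p : ℕ} (u v : (Fin p → ZMod 2) × (Fin p → ZMod 2)) :
    omegaF u v = omegaF v u := by
  unfold omegaF; rw [dotp_comm u.1 v.2, dotp_comm u.2 v.1, add_comm]

lemma omegaF_add_left {p : ℕ} (u v w : (Fin p → ZMod 2) × (Fin p → ZMod 2)) :
    omegaF (u + v) w = omegaF u w + omegaF v w := by
  unfold omegaF
  show dotp (u.1 + v.1) w.2 + dotp (u.2 + v.2) w.1 = _
  rw [dotp_add_left, dotp_add_left]; ring

lemma omegaF_smul_left {p : ℕ} (s : ZMod 2) (u w : (Fin p → ZMod 2) × (Fin p → ZMod 2)) :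
    omegaF (s • u) w = s * omegaF u w := by
  unfold omegaF
  show dotp (s • u.1) w.2 + dotp (s • u.2) w.1 = _
  rw [dotp_smul_left, dotp_smul_left]; ring

lemma omegaF_add_right {p : ℕ} (u v w : (Fin p → ZMod 2) × (Fin p → ZMod 2)) :
    omegaF u (v + w) = omegaF u v + omegaF u w := by
  rw [omegaF_comm, omegaF_add_left, omegaF_comm v u, omegaF_comm w u]

lemma omegaF_smul_right {p : ℕ} (s : ZMod 2) (u w : (Fin p → ZMod 2) × (Fin p → ZMod 2)) :
    omegaF u (s • w) = s * omegaF u w := by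
  rw [omegaF_comm, omegaF_smul_left, omegaF_comm w u]

lemma omegaF_self {p : ℕ} (z : (Fin p → ZMod 2) × (Fin p → ZMod 2)) :
    omegaF z z = 0 := by
  unfold omegaF
  rw [dotp_comm z.2 z.1]
  rcases zmod2_cases (dotp z.1 z.2) with h | h <;> rw [h] <;> rfl

lemma exists_omega_one {p : ℕ}
    (V : Submodule (ZMod 2) ((Fin p → ZMod 2) × (Fin p → ZMod 2)))
    (hV : IsMaxIsotropic V) (z : (Fin p → ZMod 2) × (Fin p → ZMod 2)) (hz : z ∉ V) :
    ∃ u ∈ V, omegaF u z = 1 := by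
  by_contra hcon
  push_neg at hcon
  have hzero : ∀ u ∈ V, omegaF u z = 0 := by
    intro u hu
    rcases zmod2_cases (omegaF u z) with h | h
    · exact h
    · exact absurd h (hcon u hu)
  set W := V ⊔ Submodule.span (ZMod 2) {z} with hW
  have hWiso : IsIsotropic W := by
    intro w₁ h₁ w₂ h₂
    rw [hW, Submodule.mem_sup] at h₁ h₂
    obtain ⟨v₁, hv₁, y₁, hy₁, rfl⟩ := h₁
    obtain ⟨v₂, hv₂, y₂, hy₂, rfl⟩ := h₂
    rw [Submodule.mem_span_singleton] at hy₁ hy₂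
    obtain ⟨s₁, rfl⟩ := hy₁
    obtain ⟨s₂, rfl⟩ := hy₂
    rw [omegaF_add_left, omegaF_add_right, omegaF_add_right, omegaF_smul_left,
      omegaF_smul_left, omegaF_smul_right, omegaF_smul_right, omegaF_self,
      omegaF_comm z v₂, hV.1 v₁ hv₁ v₂ hv₂, hzero v₁ hv₁, hzero v₂ hv₂]
    ring
  have := hV.2 W hWiso le_sup_left
  exact hz (this ▸ Submodule.mem_sup_right (Submodule.mem_span_singleton_self z))

lemma stab_dotp {p : ℕ}
    (V : Submodule (ZMod 2) ((Fin p → ZMod 2) × (Fin p → ZMod 2)))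
    (ψ₀ : (Fin p → ZMod 2) → ℂ) (hψ₀ : ψ₀ ≠ 0)
    (hstab : ∀ u ∈ V, (pauli u.1 u.2).mulVec ψ₀ = ψ₀)
    (u : (Fin p → ZMod 2) × (Fin p → ZMod 2)) (hu : u ∈ V) :
    dotp u.1 u.2 = 0 := by
  obtain ⟨x₀, hx₀⟩ := Function.ne_iff.mp hψ₀
  have h := pauli_pauli u.1 u.2 u.1 u.2 ψ₀ x₀
  rw [hstab u hu, hstab u hu, addv_self, addv_self, mulVec_pauli, dotp_zero_left,
    sgn_zero, add_zero, one_mul] at h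
  rcases zmod2_cases (dotp u.2 u.1) with hd | hd
  · rw [dotp_comm]; rw [← hd, dotp_comm]
  · rw [hd, sgn_one] at h
    exfalso
    apply hx₀
    have : ψ₀ x₀ + ψ₀ x₀ = 0 := by linear_combination h
    have h2 := add_self_eq_zero.mp this
    simpa using h2

lemma key_orth {p : ℕ}
    (V : Submodule (ZMod 2) ((Fin p → ZMod 2) × (Fin p → ZMod 2)))
    (hV : IsMaxIsotropic V)
    (ψ₀ : (Fin p → ZMod 2) → ℂ) (hψ₀ : ψ₀ ≠ 0)
    (hstab : ∀ u ∈ V, (pauli u.1 u.2).mulVec ψ₀ = ψ₀)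
    (z : (Fin p → ZMod 2) × (Fin p → ZMod 2)) (hz : z ∉ V) :
    ∑ x, (starRingEnd ℂ) (ψ₀ x) * (pauli z.1 z.2).mulVec ψ₀ x = 0 := by
  obtain ⟨u, hu, hω⟩ := exists_omega_one V hV z hz
  set T := ∑ x, (starRingEnd ℂ) (ψ₀ x) * (pauli (z.1 + u.1) (z.2 + u.2)).mulVec ψ₀ x with hT
  set S0 := ∑ x, (starRingEnd ℂ) (ψ₀ x) * (pauli z.1 z.2).mulVec ψ₀ x with hS0
  have hzu : (pauli z.1 z.2).mulVec ψ₀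
      = fun x => sgn (dotp u.2 z.1) * (pauli (z.1 + u.1) (z.2 + u.2)).mulVec ψ₀ x := by
    funext x
    conv_lhs => rw [← hstab u hu]
    exact pauli_pauli z.1 z.2 u.1 u.2 ψ₀ x
  have huz : (pauli u.1 u.2).mulVec ((pauli z.1 z.2).mulVec ψ₀)
      = fun x => sgn (dotp z.2 u.1) * (pauli (z.1 + u.1) (z.2 + u.2)).mulVec ψ₀ x := by
    funext x
    rw [pauli_pauli, add_comm u.1 z.1, add_comm u.2 z.2]
  have e1 : S0 = sgn (dotp u.2 z.1) * T := by
    rw [hS0, hzu, hT, Finset.mul_sum]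
    exact Finset.sum_congr rfl fun x _ => by ring
  have e2 : S0 = sgn (dotp z.2 u.1) * T := by
    have e2' := pauli_adjoint u.1 u.2 ψ₀ ((pauli z.1 z.2).mulVec ψ₀)
    rw [hstab u hu, stab_dotp V ψ₀ hψ₀ hstab u hu, sgn_zero, one_mul, huz] at e2'
    rw [hS0, e2', hT, Finset.mul_sum]
    exact Finset.sum_congr rfl fun x _ => by ring
  have hsum : dotp u.2 z.1 + dotp z.2 u.1 = 1 := by
    rw [dotp_comm z.2 u.1, add_comm]; exact hω
  have hneg := sgn_neg_of_add_one hsum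
  have he : S0 = -S0 := by
    calc S0 = sgn (dotp u.2 z.1) * T := e1
    _ = -(sgn (dotp z.2 u.1) * T) := by rw [hneg]; ring
    _ = -S0 := by rw [← e2]
  have h2 : (2 : ℂ) * S0 = 0 := by linear_combination he
  exact (mul_eq_zero.mp h2).resolve_left two_ne_zero

lemma main_aux {p : ℕ}
    (V : Submodule (ZMod 2) ((Fin p → ZMod 2) × (Fin p → ZMod 2)))
    (hV : IsMaxIsotropic V)
    (ψ₀ : (Fin p → ZMod 2) → ℂ) (hψ₀ : ψ₀ ≠ 0)
    (hstab : ∀ u ∈ V, (pauli u.1 u.2).mulVec ψ₀ = ψ₀)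
    (a b c d a' b' c' d' : Fin p → ZMod 2)
    (hz : ((a + c + a' + c', b + d + b' + d') :
      (Fin p → ZMod 2) × (Fin p → ZMod 2)) ∉ V) :
    ∑ x, (starRingEnd ℂ) ((pauli a b).mulVec ((pauli c d).mulVec ψ₀) x) *
      (pauli a' b').mulVec ((pauli c' d').mulVec ψ₀) x = 0 := by
  have key := key_orth V hV ψ₀ hψ₀ hstab (a + c + a' + c', b + d + b' + d') hz
  have h1 : (pauli a b).mulVec ((pauli c d).mulVec ψ₀)
      = fun x => sgn (dotp d a) * (pauli (a + c) (b + d)).mulVec ψ₀ x :=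
    funext fun x => pauli_pauli a b c d ψ₀ x
  have h2 : (pauli a' b').mulVec ((pauli c' d').mulVec ψ₀)
      = fun x => sgn (dotp d' a') * (pauli (a' + c') (b' + d')).mulVec ψ₀ x :=
    funext fun x => pauli_pauli a' b' c' d' ψ₀ x
  have h3 : (pauli (a + c) (b + d)).mulVec ((pauli (a' + c') (b' + d')).mulVec ψ₀)
      = fun x => sgn (dotp (b' + d') (a + c)) *
          (pauli (a + c + a' + c') (b + d + b' + d')).mulVec ψ₀ x := by
    funext x
    rw [pauli_pauli, add_assoc (a + c) a' c', add_assoc (b + d) b' d']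
  have adj := pauli_adjoint (a + c) (b + d) ψ₀ ((pauli (a' + c') (b' + d')).mulVec ψ₀)
  rw [h3] at adj
  rw [h1, h2]
  have step : ∑ x, (starRingEnd ℂ) (sgn (dotp d a) * (pauli (a + c) (b + d)).mulVec ψ₀ x) *
        (sgn (dotp d' a') * (pauli (a' + c') (b' + d')).mulVec ψ₀ x)
      = sgn (dotp d a) * sgn (dotp d' a') *
        ∑ x, (starRingEnd ℂ) ((pauli (a + c) (b + d)).mulVec ψ₀ x) *
          (pauli (a' + c') (b' + d')).mulVec ψ₀ x := by
    rw [Finset.mul_sum]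
    exact Finset.sum_congr rfl fun x _ => by rw [_root_.map_mul, sgn_conj]; ring
  rw [step, adj]
  have h4 : ∑ x, (starRingEnd ℂ) (ψ₀ x) *
        (sgn (dotp (b' + d') (a + c)) *
          (pauli (a + c + a' + c') (b + d + b' + d')).mulVec ψ₀ x)
      = sgn (dotp (b' + d') (a + c)) *
        ∑ x, (starRingEnd ℂ) (ψ₀ x) *
          (pauli (a + c + a' + c') (b + d + b' + d')).mulVec ψ₀ x := by
    rw [Finset.mul_sum]
    exact Finset.sum_congr rfl fun x _ => by ring
  rw [h4, key]
  ring


/-- Eq. (5) of the paper, the error-correction condition: Given a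
stabilizer state `ψ₀` of a maximal isotropic subspace `V`, error labels `ef i` and
codeword labels `cd j` such that for distinct index pairs the combined labels lie in
distinct cosets of `V`, the `N·K` syndrome states
`σ(e_i,f_i).mulVec (σ(c_j,d_j).mulVec ψ₀)` are pairwise orthogonal; hence the code has
distinguishable syndromes and corrects the error set. -/
theorem syndrome_states_orthogonal {p : ℕ} (hp : 1 ≤ p)
    (V : Submodule (ZMod 2) ((Fin p → ZMod 2) × (Fin p → ZMod 2)))
    (hV : IsMaxIsotropic V) (ψ₀ : (Fin p → ZMod 2) → ℂ) (hψ₀ : ψ₀ ≠ 0)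
    (hstab : ∀ u ∈ V, (pauli u.1 u.2).mulVec ψ₀ = ψ₀)
    (N K : ℕ)
    (ef : Fin N → (Fin p → ZMod 2) × (Fin p → ZMod 2))
    (cd : Fin K → (Fin p → ZMod 2) × (Fin p → ZMod 2))
    (hdist : ∀ (i : Fin N) (j : Fin K) (m : Fin N) (n : Fin K),
      (i, j) ≠ (m, n) → ef i + cd j + ef m + cd n ∉ V) :
    ∀ (i : Fin N) (j : Fin K) (m : Fin N) (n : Fin K), (i, j) ≠ (m, n) →
      (∑ x, (starRingEnd ℂ)
          ((pauli (ef i).1 (ef i).2).mulVec ((pauli (cd j).1 (cd j).2).mulVec ψ₀) x) *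
        (pauli (ef m).1 (ef m).2).mulVec ((pauli (cd n).1 (cd n).2).mulVec ψ₀) x) = 0 := by
  intro i j m n hne
  apply main_aux V hV ψ₀ hψ₀ hstab
  have hpair : ((((ef i).1 + (cd j).1 + (ef m).1 + (cd n).1,
      (ef i).2 + (cd j).2 + (ef m).2 + (cd n).2)) :
      (Fin p → ZMod 2) × (Fin p → ZMod 2)) = ef i + cd j + ef m + cd n := by
    ext <;> simp [Prod.fst_add, Prod.snd_add]
  rw [hpair]
  exact hdist i j m n hne
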